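/- Let A be a nondegenerate n×n Hermitian matrix over ℂ such that every leading principal l×l submatrix of A is nondegenerate (invertible) for 1 ≤ l ≤ n. Then A is *-congruent to the diagonal matrix D = diag(M₁, M₂/M₁, ..., M_n/M_{n-1}), where M_l denotes the leading principal l×l minor of A (and M₀ = 1); i.e., there exists an invertible matrix P with A = P* D P. -/

import Mathlib

open Matrix

private theorem aux_jacobi : ∀ (n : ℕ) (A : Matrix (Fin n) (Fin n) ℂ), A.IsHermitian →
    ∀ M : ℕ → ℂ, M 0 = 1 →
    (∀ l : ℕ, ∀ hl : l ≤ n,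
      M l = (A.submatrix (Fin.castLE hl) (Fin.castLE hl)).det) →
    (∀ l : ℕ, 1 ≤ l → l ≤ n → M l ≠ 0) →
    ∃ P : Matrix (Fin n) (Fin n) ℂ, IsUnit P.det ∧
      A = Pᴴ * Matrix.diagonal (fun i : Fin n => M ((i : ℕ) + 1) / M (i : ℕ)) * P := by
  intro n
  induction n with
  | zero =>
    intro A hA M hM0 hM hnd
    refine ⟨1, by simp, ?_⟩
    ext i j
    exact i.elim0
  | succ m ih =>
    intro A hA M hM0 hM hnd
    set B : Matrix (Fin m) (Fin m) ℂ :=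
      A.submatrix (Fin.castLE (Nat.le_succ m)) (Fin.castLE (Nat.le_succ m)) with hBdef
    have hB : B.IsHermitian := hA.submatrix _
    have hMB : ∀ l : ℕ, ∀ hl : l ≤ m,
        M l = (B.submatrix (Fin.castLE hl) (Fin.castLE hl)).det := by
      intro l hl
      rw [hBdef, Matrix.submatrix_submatrix]
      have hc : Fin.castLE (Nat.le_succ m) ∘ Fin.castLE hl
          = Fin.castLE (hl.trans (Nat.le_succ m)) := rfl
      rw [hc]
      exact hM l _
    obtain ⟨Q, hQu, hQ⟩ := ih B hB M hM0 hMB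
      (fun l h1 h2 => hnd l h1 (h2.trans (Nat.le_succ m)))
    have hdetB : B.det = M m := (hMB m le_rfl).symm.trans (by congr 1)
    have hMm : M m ≠ 0 := by
      rcases Nat.eq_zero_or_pos m with h | h
      · rw [h, hM0]; exact one_ne_zero
      · exact hnd m h (Nat.le_succ m)
    have hdetA : A.det = M (m + 1) := by
      rw [hM (m + 1) le_rfl]
      congr 1
    haveI : Invertible B := B.invertibleOfIsUnitDet (by
      rw [hdetB]; exact isUnit_iff_ne_zero.mpr hMm)
    set e : Fin m ⊕ Fin 1 ≃ Fin (m + 1) := finSumFinEquiv with hedef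
    set A' : Matrix (Fin m ⊕ Fin 1) (Fin m ⊕ Fin 1) ℂ := A.submatrix e e with hA'def
    have hA' : A'.IsHermitian := hA.submatrix _
    set c : Matrix (Fin m) (Fin 1) ℂ := A'.toBlocks₁₂ with hcdef
    set d : Matrix (Fin 1) (Fin 1) ℂ := A'.toBlocks₂₂ with hddef
    have hB11 : A'.toBlocks₁₁ = B := by
      ext i j
      simp only [Matrix.toBlocks₁₁, hA'def, Matrix.submatrix_apply, hBdef, Matrix.of_apply,
        hedef, finSumFinEquiv_apply_left]
      congr 1
    have hB21 : A'.toBlocks₂₁ = cᴴ := by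
      ext i j
      have := congrFun (congrFun hA' (Sum.inr i)) (Sum.inl j)
      simpa [Matrix.toBlocks₂₁, Matrix.conjTranspose_apply, hcdef, Matrix.toBlocks₁₂]
        using this.symm
    have hblocks : A' = fromBlocks B c cᴴ d := by
      rw [← hB11, ← hB21, hcdef, hddef, Matrix.fromBlocks_toBlocks]
    -- Schur decomposition
    set S : Matrix (Fin 1) (Fin 1) ℂ := d - cᴴ * B⁻¹ * c with hSdef
    set U : Matrix (Fin m ⊕ Fin 1) (Fin m ⊕ Fin 1) ℂ := fromBlocks 1 (B⁻¹ * c) 0 1 with hUdef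
    have hUH : Uᴴ = fromBlocks 1 0 (cᴴ * B⁻¹) 1 := by
      rw [hUdef, fromBlocks_conjTranspose, Matrix.conjTranspose_mul,
        Matrix.conjTranspose_nonsing_inv, hB.eq]
      simp
    have hdecomp : A' = Uᴴ * fromBlocks B 0 0 S * U := by
      rw [hblocks, hUH, hUdef, hSdef]
      have := fromBlocks_eq_of_invertible₁₁ B c cᴴ d
      rwa [invOf_eq_nonsing_inv] at this
    -- determinant computation
    have hdetA' : A'.det = A.det := Matrix.det_submatrix_equiv_self e A
    have hdetU : U.det = 1 := by
      rw [hUdef, Matrix.det_fromBlocks_zero₂₁]; simp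
    have hS00 : S 0 0 = M (m + 1) / M m := by
      have h1 : A'.det = B.det * S.det := by
        rw [hdecomp, Matrix.det_mul, Matrix.det_mul, Matrix.det_fromBlocks_zero₂₁,
          Matrix.det_conjTranspose, hdetU]
        simp
      rw [hdetA', hdetA, hdetB, Matrix.det_fin_one] at h1
      field_simp [h1]
      rw [h1]; ring
    have hSdiag : S = Matrix.diagonal (fun _ : Fin 1 => M (m + 1) / M m) := by
      ext i j
      fin_cases i
      fin_cases j
      simpa using hS00
    -- assemble congruence over the sum type
    set D₀ : Matrix (Fin m) (Fin m) ℂ :=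
      Matrix.diagonal (fun i : Fin m => M ((i : ℕ) + 1) / M (i : ℕ)) with hD0def
    set F : Matrix (Fin m ⊕ Fin 1) (Fin m ⊕ Fin 1) ℂ := fromBlocks Q 0 0 1 with hFdef
    set dsum : Fin m ⊕ Fin 1 → ℂ :=
      Sum.elim (fun i : Fin m => M ((i : ℕ) + 1) / M (i : ℕ))
        (fun _ : Fin 1 => M (m + 1) / M m) with hdsumdef
    have hmid : fromBlocks B 0 0 S = Fᴴ * Matrix.diagonal dsum * F := by
      rw [hdsumdef, ← Matrix.fromBlocks_diagonal, ← hD0def, ← hSdiag, hFdef,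
        fromBlocks_conjTranspose]
      simp [Matrix.fromBlocks_multiply, hQ, Matrix.mul_assoc]
    set P₀ : Matrix (Fin m ⊕ Fin 1) (Fin m ⊕ Fin 1) ℂ := F * U with hP0def
    have hcong : A' = P₀ᴴ * Matrix.diagonal dsum * P₀ := by
      rw [hdecomp, hmid, hP0def, Matrix.conjTranspose_mul]
      noncomm_ring
    refine ⟨P₀.submatrix e.symm e.symm, ?_, ?_⟩
    · rw [Matrix.det_submatrix_equiv_self, hP0def, Matrix.det_mul, hdetU, mul_one, hFdef,
        Matrix.det_fromBlocks_zero₂₁, Matrix.det_one, mul_one]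
      exact hQu
    · have hAeq : A = A'.submatrix e.symm e.symm := by
        rw [hA'def, Matrix.submatrix_submatrix, Equiv.self_comp_symm, Matrix.submatrix_id_id]
      have hfun : dsum ∘ ⇑e.symm = fun i : Fin (m + 1) => M ((i : ℕ) + 1) / M (i : ℕ) := by
        funext i
        obtain ⟨x, rfl⟩ := e.surjective i
        simp only [Function.comp_apply, Equiv.symm_apply_apply]
        cases x with
        | inl j => simp [hdsumdef, hedef]
        | inr j => simp [hdsumdef, hedef, Fin.val_eq_zero]
      rw [hAeq, hcong,
        ← Matrix.submatrix_mul_equiv (P₀ᴴ * Matrix.diagonal dsum) P₀ _ e.symm _,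
        ← Matrix.submatrix_mul_equiv P₀ᴴ (Matrix.diagonal dsum) _ e.symm _,
        Matrix.submatrix_diagonal_equiv, hfun, ← Matrix.conjTranspose_submatrix]

/-- A nondegenerate Hermitian matrix all of whose leading principal minors are nonzero
is *-congruent to the diagonal matrix of successive ratios of leading principal minors. -/
theorem hermitian_star_congruent_diagonal_of_leading_minors_ne_zero
    (n : ℕ) (A : Matrix (Fin n) (Fin n) ℂ) (hA : A.IsHermitian)
    (M : ℕ → ℂ) (hM0 : M 0 = 1)
    (hM : ∀ l : ℕ, ∀ hl : l ≤ n,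
      M l = (A.submatrix (Fin.castLE hl) (Fin.castLE hl)).det)
    (hnd : ∀ l : ℕ, 1 ≤ l → l ≤ n → M l ≠ 0) :
    ∃ P : Matrix (Fin n) (Fin n) ℂ, IsUnit P.det ∧
      A = Pᴴ * Matrix.diagonal (fun i : Fin n => M ((i : ℕ) + 1) / M (i : ℕ)) * P := by
  exact aux_jacobi n A hA M hM0 hM hnd
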